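/- Let u^1,...,u^L : [0,∞) → ℝ^d satisfy the gradient flow du^j/dt = -(⊙_{k≠j} u^k) ⊙ ∇L(θ) with θ = ⊙_j u^j. Then for all layers j, k, all t ≥ 0 and all components i ∈ [d], u^j_i(t)^2 - u^j_i(0)^2 = u^k_i(t)^2 - u^k_i(0)^2. -/

import Mathlib

open Finset

/-- The gradient of `f : ℝ^d → ℝ`, given componentwise by the partial derivatives. -/
noncomputable def grad {d : ℕ} (f : (Fin d → ℝ) → ℝ) (x : Fin d → ℝ) (i : Fin d) : ℝ :=
  fderiv ℝ f x (Pi.single i 1)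

theorem stmt_1 {L d : ℕ} (u : Fin L → ℝ → Fin d → ℝ) (Loss : (Fin d → ℝ) → ℝ)
    (hLoss : ContDiff ℝ 1 Loss)
    (θ : ℝ → Fin d → ℝ) (hθ : ∀ t i, θ t i = ∏ j, u j t i)
    (hflow : ∀ j, ∀ t ≥ (0:ℝ), ∀ i,
      HasDerivAt (fun s => u j s i)
        (-((∏ k ∈ Finset.univ.erase j, u k t i) * grad Loss (θ t) i)) t) :
    ∀ j k : Fin L, ∀ t ≥ (0:ℝ), ∀ i,
      u j t i ^ 2 - u j 0 i ^ 2 = u k t i ^ 2 - u k 0 i ^ 2 := by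
  intro j k t ht i
  set f : ℝ → ℝ := fun s => u j s i ^ 2 - u k s i ^ 2 with hf
  have hd : ∀ x ∈ Set.Icc (0:ℝ) t, HasDerivAt f 0 x := by
    intro x hx
    have hx0 : x ≥ 0 := hx.1
    have hj := hflow j x hx0 i
    have hk := hflow k x hx0 i
    have h := (hj.pow 2).sub (hk.pow 2)
    convert h using 1
    · rfl
    · rfl
    · rfl
    have e1 : u j x i * ∏ m ∈ Finset.univ.erase j, u m x i = ∏ m, u m x i :=
      Finset.mul_prod_erase Finset.univ (fun m => u m x i) (Finset.mem_univ j)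
    have e2 : u k x i * ∏ m ∈ Finset.univ.erase k, u m x i = ∏ m, u m x i :=
      Finset.mul_prod_erase Finset.univ (fun m => u m x i) (Finset.mem_univ k)
    linear_combination 2 * grad Loss (θ x) i * e1 - 2 * grad Loss (θ x) i * e2
  have key : f t = f 0 := by
    have hcont : ContinuousOn f (Set.Icc 0 t) := fun x hx =>
      (hd x hx).continuousAt.continuousWithinAt
    have := constant_of_has_deriv_right_zero hcont
      (fun x hx => ((hd x ⟨hx.1, le_of_lt hx.2⟩).hasDerivWithinAt)) t
      (Set.right_mem_Icc.mpr ht)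
    exact this
  have := key
  simp only [hf] at this
  linarith
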